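/- arXiv:2302.01376 — 6 statements merged into one kernel-verified Lean document; each statement's English description precedes it below -/
import Mathlib

section
/- Let (X,d) be a metric space and K a nonempty compact subset of X. Then there exists a Borel measurable map Π_K : X → K such that d(Π_K(x), x) = dist(x, K) for every x ∈ X. -/
open Metric Filter Topology Set

namespace ProjSel

variable {X : Type*} [MetricSpace X]

/-- Candidate index set at step `n`, given current constraint set `S`. -/
def good (e : ℕ → X) (K : Set X) (x : X) (n : ℕ) (S : Set X) (k : ℕ) : Prop :=
  (S ∩ closedBall (e k) ((1/2 : ℝ)^n)).Nonempty ∧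
    infDist x (S ∩ closedBall (e k) ((1/2 : ℝ)^n)) ≤ infDist x K

noncomputable def pick (e : ℕ → X) (K : Set X) (x : X) (n : ℕ) (S : Set X) : ℕ :=
  sInf {k | good e K x n S k}

noncomputable def C (e : ℕ → X) (K : Set X) (x : X) : ℕ → Set X
  | 0 => K
  | n+1 => C e K x n ∩ closedBall (e (pick e K x n (C e K x n))) ((1/2 : ℝ)^n)

noncomputable def pickIdx (e : ℕ → X) (K : Set X) (x : X) (n : ℕ) : ℕ :=
  pick e K x n (C e K x n)

noncomputable def g (e : ℕ → X) (K : Set X) (x : X) (n : ℕ) : X := e (pickIdx e K x n)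

lemma C_succ (e : ℕ → X) (K : Set X) (x : X) (n : ℕ) :
    C e K x (n+1) = C e K x n ∩ closedBall (g e K x n) ((1/2 : ℝ)^n) := rfl

lemma C_subset (e : ℕ → X) (K : Set X) (x : X) : ∀ n, C e K x n ⊆ K
  | 0 => le_refl _
  | n+1 => (Set.inter_subset_left).trans (C_subset e K x n)

lemma C_anti (e : ℕ → X) (K : Set X) (x : X) : Antitone (C e K x) :=
  antitone_nat_of_succ_le fun n => Set.inter_subset_left

lemma isCompact_C (hK : IsCompact K) (e : ℕ → X) (x : X) : ∀ n, IsCompact (C e K x n)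
  | 0 => hK
  | n+1 => (isCompact_C hK e x n).inter_right isClosed_closedBall

/-- The key invariant: every constraint set contains an exact nearest point. -/
lemma invariant (hK : IsCompact K) (hne : K.Nonempty) (e : ℕ → X)
    (he : ∀ y ∈ K, ∀ ε > 0, ∃ k, dist y (e k) < ε) (x : X) :
    ∀ n, ∃ y ∈ C e K x n, dist x y = infDist x K := by
  intro n
  induction n with
  | zero =>
    obtain ⟨y, hy, h⟩ := hK.exists_infDist_eq_dist hne x
    exact ⟨y, hy, h.symm⟩
  | succ n ih =>
    obtain ⟨y, hyC, hyd⟩ := ih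
    have hyK : y ∈ K := C_subset e K x n hyC
    have hr : (0:ℝ) < (1/2 : ℝ)^n := by positivity
    obtain ⟨k, hk⟩ := he y hyK _ hr
    have hyball : y ∈ closedBall (e k) ((1/2 : ℝ)^n) :=
      Metric.mem_closedBall.2 hk.le
    have hgood : good e K x n (C e K x n) k := by
      refine ⟨⟨y, hyC, hyball⟩, ?_⟩
      calc infDist x (C e K x n ∩ closedBall (e k) ((1/2 : ℝ)^n)) ≤ dist x y :=
            infDist_le_dist_of_mem ⟨hyC, hyball⟩
        _ = infDist x K := hyd
    have hne' : {k | good e K x n (C e K x n) k}.Nonempty := ⟨k, hgood⟩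
    have hmem : good e K x n (C e K x n) (pick e K x n (C e K x n)) :=
      Nat.sInf_mem hne'
    set T := C e K x n ∩ closedBall (e (pick e K x n (C e K x n))) ((1/2 : ℝ)^n) with hT
    have hTc : IsCompact T := (isCompact_C hK e x n).inter_right isClosed_closedBall
    obtain ⟨y', hy'T, hy'd⟩ := hTc.exists_infDist_eq_dist hmem.1 x
    have h1 : dist x y' ≤ infDist x K := by rw [← hy'd]; exact hmem.2
    have h2 : infDist x K ≤ dist x y' := infDist_le_dist_of_mem (C_subset e K x n hy'T.1)
    exact ⟨y', hy'T, le_antisymm h1 h2⟩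

/-- Fixed version of the constraint set, given a prescribed history of indices. -/
def Cfix (e : ℕ → X) (K : Set X) (v : ℕ → ℕ) : ℕ → Set X
  | 0 => K
  | n+1 => Cfix e K v n ∩ closedBall (e (v n)) ((1/2 : ℝ)^n)

lemma C_eq_Cfix (e : ℕ → X) (K : Set X) (x : X) (v : ℕ → ℕ) :
    ∀ n, (∀ m < n, pickIdx e K x m = v m) → C e K x n = Cfix e K v n := by
  intro n
  induction n with
  | zero => intro _; rfl
  | succ n ih =>
    intro h
    have h1 : C e K x n = Cfix e K v n := ih fun m hm => h m (hm.trans (Nat.lt_succ_self n))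
    show C e K x n ∩ closedBall (e (pickIdx e K x n)) _ = _
    rw [h1, h n (Nat.lt_succ_self n)]
    rfl

lemma measurableSet_good [MeasurableSpace X] [BorelSpace X]
    (e : ℕ → X) (K : Set X) (n : ℕ) (S : Set X) (k : ℕ) :
    MeasurableSet {x | good e K x n S k} := by
  by_cases h : (S ∩ closedBall (e k) ((1/2 : ℝ)^n)).Nonempty
  · have heq : {x | good e K x n S k} =
        {x | infDist x (S ∩ closedBall (e k) ((1/2 : ℝ)^n)) ≤ infDist x K} := by
      ext x
      exact and_iff_right h
    rw [heq]
    exact measurableSet_le (continuous_infDist_pt _).measurable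
      (continuous_infDist_pt _).measurable
  · have heq : {x | good e K x n S k} = ∅ :=
      Set.eq_empty_iff_forall_notMem.mpr fun x hx => h hx.1
    rw [heq]
    exact MeasurableSet.empty

lemma measurableSet_sInf_eq {c : X → ℕ → Prop} [MeasurableSpace X]
    (h : ∀ k, MeasurableSet {x | c x k}) (j : ℕ) :
    MeasurableSet {x | sInf {k | c x k} = j} := by
  have key : {x | sInf {k | c x k} = j} =
      ({x | c x j} ∩ ⋂ i ∈ Finset.range j, {x | c x i}ᶜ) ∪
        {x | j = 0 ∧ ∀ i, ¬ c x i} := by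
    ext x
    simp only [Set.mem_union, Set.mem_inter_iff, Set.mem_iInter, Set.mem_setOf_eq,
      Set.mem_compl_iff, Finset.mem_range]
    constructor
    · intro hx
      by_cases hne : {k | c x k}.Nonempty
      · left
        have hmem := Nat.sInf_mem hne
        rw [hx] at hmem
        refine ⟨hmem, fun i hi hci => ?_⟩
        have h2 := Nat.sInf_le (show i ∈ {k | c x k} from hci)
        omega
      · have h0 : ∀ i, ¬ c x i := fun i hci => hne ⟨i, hci⟩
        right
        have hemp : {k | c x k} = ∅ := Set.eq_empty_iff_forall_notMem.mpr h0
        rw [hemp, Nat.sInf_empty] at hx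
        exact ⟨hx.symm, h0⟩
    · rintro (⟨hcj, hlt⟩ | ⟨hj, hall⟩)
      · have h1 : sInf {k | c x k} ≤ j := Nat.sInf_le hcj
        have h2 := Nat.sInf_mem (⟨j, hcj⟩ : {k | c x k}.Nonempty)
        by_contra hne
        exact hlt _ (lt_of_le_of_ne h1 hne) h2
      · have hemp : {k | c x k} = ∅ := Set.eq_empty_iff_forall_notMem.mpr hall
        rw [hemp, Nat.sInf_empty, hj]
  rw [key]
  refine (MeasurableSet.inter (h j) ?_).union ?_
  · exact MeasurableSet.biInter (Finset.range j).countable_toSet fun i _ => (h i).compl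
  · by_cases hj : j = 0
    · have heq : {x | j = 0 ∧ ∀ i, ¬ c x i} = ⋂ i, {x | c x i}ᶜ := by
        ext x; simp [hj]
      rw [heq]; exact MeasurableSet.iInter fun i => (h i).compl
    · have heq : {x | j = 0 ∧ ∀ i, ¬ c x i} = ∅ := by
        ext x; simp [hj]
      rw [heq]; exact MeasurableSet.empty

lemma measurableSet_pick_fixed [MeasurableSpace X] [BorelSpace X]
    (e : ℕ → X) (K : Set X) (n : ℕ) (S : Set X) (j : ℕ) :
    MeasurableSet {x | pick e K x n S = j} :=
  measurableSet_sInf_eq (fun k => measurableSet_good e K n S k) j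

lemma measurableSet_pickIdx [MeasurableSpace X] [BorelSpace X]
    (e : ℕ → X) (K : Set X) : ∀ n j, MeasurableSet {x | pickIdx e K x n = j} := by
  intro n
  induction n using Nat.strong_induction_on with
  | _ n ih =>
    intro j
    have key : {x | pickIdx e K x n = j} =
        ⋃ v : Fin n → ℕ, ((⋂ m : Fin n, {x | pickIdx e K x (m : ℕ) = v m}) ∩
          {x | pick e K x n (Cfix e K (fun i => if h : i < n then v ⟨i, h⟩ else 0) n) = j}) := by
      ext x
      simp only [Set.mem_iUnion, Set.mem_inter_iff, Set.mem_iInter, Set.mem_setOf_eq]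
      constructor
      · intro hx
        refine ⟨fun m => pickIdx e K x (m : ℕ), fun m => rfl, ?_⟩
        have := C_eq_Cfix e K x
          (fun i => if h : i < n then pickIdx e K x i else 0) n
          (fun m hm => by simp [hm])
        rw [← this]
        exact hx
      · rintro ⟨v, hv, hp⟩
        have := C_eq_Cfix e K x
          (fun i => if h : i < n then v ⟨i, h⟩ else 0) n
          (fun m hm => by simp [hm, ← hv ⟨m, hm⟩])
        rw [← this] at hp
        exact hp
    rw [key]
    exact MeasurableSet.iUnion fun v =>
      (MeasurableSet.iInter fun (m : Fin n) => ih (m : ℕ) m.2 (v m)).inter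
        (measurableSet_pick_fixed e K n _ j)

lemma measurable_g [MeasurableSpace X] [BorelSpace X] (e : ℕ → X) (K : Set X) (n : ℕ) :
    Measurable (fun x => g e K x n) := by
  have h1 : Measurable (fun x => pickIdx e K x n) :=
    measurable_to_countable' fun j => measurableSet_pickIdx e K n j
  exact (measurable_from_top (f := e)).comp h1

end ProjSel

open Metric Filter Topology ProjSel

/-- For a nonempty compact subset `K` of a metric space `X`, there is a Borel measurable
map `Π_K : X → K` with `dist (Π_K x) x = infDist x K` for every `x`. -/
theorem stmt_0 {X : Type*} [MetricSpace X] [MeasurableSpace X] [BorelSpace X]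
    (K : Set X) (hK : IsCompact K) (hne : K.Nonempty) :
    ∃ f : X → X, Measurable f ∧ (∀ x, f x ∈ K) ∧ ∀ x, dist (f x) x = Metric.infDist x K := by
  haveI : CompactSpace K := isCompact_iff_compactSpace.mp hK
  haveI : Nonempty K := hne.to_subtype
  set e : ℕ → X := fun n => (TopologicalSpace.denseSeq K n : X) with he_def
  have heK : ∀ n, e n ∈ K := fun n => (TopologicalSpace.denseSeq K n).2
  have he : ∀ y ∈ K, ∀ ε > 0, ∃ k, dist y (e k) < ε := by
    intro y hy ε hε
    obtain ⟨k, hk⟩ := (TopologicalSpace.denseRange_denseSeq K).exists_dist_lt ⟨y, hy⟩ hε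
    exact ⟨k, by simpa [Subtype.dist_eq] using hk⟩
  -- exact nearest points along the constraint sets
  have inv := ProjSel.invariant hK hne e he
  -- the approximating sequence is Cauchy and converges to a nearest point
  have main : ∀ x : X, ∃ y ∈ K, Tendsto (fun n => g e K x n) atTop (𝓝 y) ∧
      dist x y = infDist x K := by
    intro x
    choose y hyC hyd using fun n => inv x (n + 1)
    have hclose : ∀ n, dist (g e K x n) (y n) ≤ (1/2 : ℝ)^n := by
      intro n
      have : y n ∈ closedBall (g e K x n) ((1/2 : ℝ)^n) := (hyC n).2
      simpa [dist_comm] using this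
    have hyK : ∀ n, y n ∈ K := fun n => C_subset e K x (n+1) (hyC n)
    have hcauchy : CauchySeq y := by
      rw [Metric.cauchySeq_iff']
      intro ε hε
      obtain ⟨N, hN⟩ := exists_pow_lt_of_lt_one (half_pos hε) (by norm_num : (1/2 : ℝ) < 1)
      refine ⟨N, fun m hm => ?_⟩
      have hmem : y m ∈ C e K x (N + 1) :=
        C_anti e K x (by omega : N + 1 ≤ m + 1) (hyC m)
      have h1 : dist (y m) (g e K x N) ≤ (1/2 : ℝ)^N := by
        have : y m ∈ closedBall (g e K x N) ((1/2 : ℝ)^N) := hmem.2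
        simpa using this
      have h2 := hclose N
      calc dist (y m) (y N) ≤ dist (y m) (g e K x N) + dist (g e K x N) (y N) :=
            dist_triangle _ _ _
        _ ≤ (1/2 : ℝ)^N + (1/2 : ℝ)^N := add_le_add h1 h2
        _ < ε/2 + ε/2 := by linarith [hN]
        _ = ε := by ring
    obtain ⟨a, haK, ha⟩ := cauchySeq_tendsto_of_isComplete hK.isComplete hyK hcauchy
    refine ⟨a, haK, ?_, ?_⟩
    · have hd0 : Tendsto (fun n => dist (g e K x n) (y n)) atTop (𝓝 0) := by
        refine squeeze_zero (fun n => dist_nonneg) hclose ?_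
        exact tendsto_pow_atTop_nhds_zero_of_lt_one (by norm_num) (by norm_num)
      exact ha.congr_dist (by simpa [dist_comm] using hd0)
    · have h1 : Tendsto (fun n => dist x (y n)) atTop (𝓝 (dist x a)) :=
        (continuous_const.dist continuous_id).continuousAt.tendsto.comp ha
      have hconst : (fun n => dist x (y n)) = fun _ => infDist x K := funext hyd
      rw [hconst] at h1
      exact tendsto_nhds_unique h1 tendsto_const_nhds
  choose ynear hyK hten hyd using main
  refine ⟨ynear, ?_, hyK, ?_⟩
  · exact measurable_of_tendsto_metrizable (fun n => measurable_g e K n)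
      (tendsto_pi_nhds.2 hten)
  · intro x
    rw [dist_comm]
    exact hyd x
end

section
/- Let (X,d) be a proper metric space (all closed balls are compact) and C ⊆ X a nonempty closed set. Then the map (x,K) ↦ dist(x, K ∩ C) from X × 𝔎(X) to [0,∞] (with the convention dist(x,∅) = +∞) is lower semicontinuous, where 𝔎(X) is the space of nonempty compact subsets of X with the Hausdorff metric. -/
open EMetric Metric Filter TopologicalSpace Set Topology

/-- In a proper metric space, for a nonempty closed set `C`, the map
`(x,K) ↦ dist(x, K ∩ C)` (valued in `[0,∞]`, with `dist(x,∅) = ∞`) is lower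
semicontinuous on `X × 𝔎(X)`, where `𝔎(X)` is the space of nonempty compact
subsets with the Hausdorff metric. -/
theorem stmt_3 {X : Type*} [MetricSpace X] [ProperSpace X]
    (C : Set X) (hC : IsClosed C) (hne : C.Nonempty) :
    LowerSemicontinuous (fun p : X × TopologicalSpace.NonemptyCompacts X =>
      EMetric.infEdist p.1 ((p.2 : Set X) ∩ C)) := by
  intro p y hy
  by_contra h
  rw [Filter.not_eventually] at h
  simp only [not_lt] at h
  obtain ⟨u, hu, hfu⟩ := Filter.exists_seq_forall_of_frequently h
  have hytop : y < ⊤ := lt_of_lt_of_le hy le_top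
  -- each (u n).2 ∩ C is nonempty
  have hnon : ∀ n, ((((u n).2 : Set X)) ∩ C).Nonempty := by
    intro n
    by_contra hempty
    rw [Set.not_nonempty_iff_eq_empty] at hempty
    have := hfu n
    rw [hempty] at this
    change Metric.infEDist _ ∅ ≤ y at this
    rw [EMetric.infEdist_empty] at this
    exact hytop.ne (le_antisymm (le_trans le_top this) le_top).symm
  -- choose nearest points
  have hcpt : ∀ n, IsCompact (((u n).2 : Set X) ∩ C) := fun n =>
    (u n).2.isCompact.inter_right hC
  choose z hz hz' using fun n => (hcpt n).exists_infEdist_eq_edist (hnon n) (u n).1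
  have hzy : ∀ n, edist (u n).1 (z n) ≤ y := fun n => (hz' n).symm.trans_le (hfu n)
  -- convergence of the pieces
  have hx : Tendsto (fun n => (u n).1) atTop (𝓝 p.1) :=
    (continuous_fst.tendsto p).comp hu
  have hK : Tendsto (fun n => (u n).2) atTop (𝓝 p.2) :=
    (continuous_snd.tendsto p).comp hu
  have hHaus : Tendsto (fun n => hausdorffEdist (((u n).2 : Set X)) (p.2 : Set X))
      atTop (𝓝 0) := by
    have := (EMetric.tendsto_atTop).1 hK
    rw [ENNReal.tendsto_nhds_zero]
    intro ε hε
    rcases this ε hε with ⟨N, hN⟩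
    exact eventually_atTop.2 ⟨N, fun n hn => le_of_lt (hN n hn)⟩
  -- z n eventually in a compact thickening of p.2
  have hKcompact : IsCompact (p.2 : Set X) := p.2.isCompact
  have hT : IsCompact (Metric.cthickening 1 (p.2 : Set X)) := hKcompact.cthickening
  have hinfz : ∀ n, EMetric.infEdist (z n) (p.2 : Set X)
      ≤ hausdorffEdist (((u n).2 : Set X)) (p.2 : Set X) := fun n =>
    EMetric.infEdist_le_hausdorffEdist_of_mem (hz n).1
  obtain ⟨N, hN⟩ : ∃ N, ∀ n ≥ N,
      hausdorffEdist (((u n).2 : Set X)) (p.2 : Set X) < ENNReal.ofReal 1 := by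
    have := (ENNReal.tendsto_nhds_zero.1 hHaus) (ENNReal.ofReal 1 / 2) (by simp)
    rcases eventually_atTop.1 this with ⟨N, hN⟩
    refine ⟨N, fun n hn => lt_of_le_of_lt (hN n hn) ?_⟩
    rw [ENNReal.div_lt_iff (by norm_num) (by simp)]
    calc ENNReal.ofReal 1 = ENNReal.ofReal 1 * 1 := by ring
    _ < ENNReal.ofReal 1 * 2 := by
        refine ENNReal.mul_lt_mul_iff_right (by simp) (by simp) |>.2 (by norm_num)
  have hmem : ∀ n, z (n + N) ∈ Metric.cthickening 1 (p.2 : Set X) := by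
    intro n
    rw [Metric.mem_cthickening_iff]
    exact le_trans (hinfz (n + N)) (le_of_lt (hN (n + N) (Nat.le_add_left N n)))
  obtain ⟨w, hwT, φ, hφ, hwz⟩ := hT.tendsto_subseq hmem
  -- w ∈ C
  have hwC : w ∈ C := hC.mem_of_tendsto hwz
    (Filter.Eventually.of_forall fun n => (hz (φ n + N)).2)
  -- w ∈ p.2
  have hwK : w ∈ (p.2 : Set X) := by
    rw [EMetric.mem_iff_infEdist_zero_of_closed hKcompact.isClosed]
    have h1 : Tendsto (fun n => EMetric.infEdist (z (φ n + N)) (p.2 : Set X)) atTop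
        (𝓝 (EMetric.infEdist w (p.2 : Set X))) :=
      (EMetric.continuous_infEdist.tendsto w).comp hwz
    have h2 : Tendsto (fun n => hausdorffEdist (((u (φ n + N)).2 : Set X)) (p.2 : Set X))
        atTop (𝓝 0) :=
      hHaus.comp ((tendsto_add_atTop_nat N).comp hφ.tendsto_atTop)
    exact le_antisymm (le_of_tendsto_of_tendsto' h1 h2 fun n => hinfz _) zero_le
  -- edist p.1 w ≤ y
  have hedist : edist p.1 w ≤ y := by
    have h1 : Tendsto (fun n => edist (u (φ n + N)).1 (z (φ n + N))) atTop
        (𝓝 (edist p.1 w)) := by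
      have hx' : Tendsto (fun n => (u (φ n + N)).1) atTop (𝓝 p.1) :=
        hx.comp ((tendsto_add_atTop_nat N).comp hφ.tendsto_atTop)
      exact (continuous_edist.tendsto (p.1, w)).comp (hx'.prodMk_nhds hwz)
    exact le_of_tendsto h1 (Filter.Eventually.of_forall fun n => hzy _)
  exact absurd (le_trans (EMetric.infEdist_le_edist_of_mem (Set.mem_inter hwK hwC)) hedist) (not_le.2 hy)
end

section
/- Let e ∈ ℝⁿ be a unit vector, 0 < σ < 1, and let γ : [a,b] → ℝⁿ be Lipschitz with a.e. derivative satisfying ⟨γ'(s), e⟩ ≥ (1 − σ²)|γ'(s)| for almost every s ∈ [a,b]. Then |γ(b) − γ(a) − (∫_a^b |γ'(s)| ds) · e| ≤ 3σ · Lip(γ) · (b − a). -/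
open MeasureTheory intervalIntegral Filter Set
open scoped RealInnerProductSpace NNReal Topology

section aux

variable {E : Type*} [NormedAddCommGroup E] [NormedSpace ℝ E]

/-- Difference quotients along `1/(k+1)` converge to the derivative. -/
private lemma seq_slope_aux {f : ℝ → E} {d : E} {x : ℝ} (hd : HasDerivAt f d x) :
    Filter.Tendsto (fun k : ℕ => (((k : ℝ) + 1)⁻¹)⁻¹ • (f (x + ((k : ℝ) + 1)⁻¹) - f x))
      atTop (𝓝 d) := by
  have hc0 : Tendsto (fun k : ℕ => ((k : ℝ) + 1)⁻¹) atTop (𝓝 0) := by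
    simpa using tendsto_one_div_add_atTop_nhds_zero_nat (𝕜 := ℝ)
  have hseq : Tendsto (fun k : ℕ => x + ((k : ℝ) + 1)⁻¹) atTop (𝓝[≠] x) := by
    refine tendsto_nhdsWithin_iff.2 ⟨by simpa using tendsto_const_nhds.add hc0, ?_⟩
    exact Filter.Eventually.of_forall fun k => by
      have : (0:ℝ) < ((k : ℝ) + 1)⁻¹ := by positivity
      simp [Set.mem_compl_iff]; linarith
  have := (hasDerivAt_iff_tendsto_slope.1 hd).comp hseq
  simpa [slope, Function.comp_def] using this

private lemma quot_norm_le_aux {f : ℝ → E} {L : ℝ≥0} (hf : LipschitzWith L f) (x : ℝ) (k : ℕ) :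
    ‖(((k : ℝ) + 1)⁻¹)⁻¹ • (f (x + ((k : ℝ) + 1)⁻¹) - f x)‖ ≤ (L : ℝ) := by
  set c : ℝ := ((k : ℝ) + 1)⁻¹ with hc
  have hcpos : 0 < c := by positivity
  have h1 : ‖f (x + c) - f x‖ ≤ (L : ℝ) * c := by
    have := hf.dist_le_mul (x + c) x
    simpa [dist_eq_norm, abs_of_pos hcpos] using this
  rw [norm_smul, Real.norm_eq_abs, abs_inv, abs_of_pos hcpos]
  calc c⁻¹ * ‖f (x + c) - f x‖ ≤ c⁻¹ * ((L : ℝ) * c) :=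
        mul_le_mul_of_nonneg_left h1 (by positivity)
    _ = (L : ℝ) := by field_simp

private lemma deriv_norm_le_of_lip_aux {f : ℝ → E} {L : ℝ≥0} (hf : LipschitzWith L f)
    {d : E} {x : ℝ} (hd : HasDerivAt f d x) : ‖d‖ ≤ (L : ℝ) :=
  le_of_tendsto (seq_slope_aux hd).norm
    (Filter.Eventually.of_forall fun k => quot_norm_le_aux hf x k)

/-- FTC for globally Lipschitz functions with a.e. derivative. -/
private lemma lip_ftc_aux [CompleteSpace E] [SecondCountableTopology E] {a b : ℝ} (hab : a ≤ b)
    {f g : ℝ → E} {L : ℝ≥0} (hf : LipschitzWith L f)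
    (hg : ∀ᵐ s ∂(volume : Measure ℝ), s ∈ Set.Ioo a b → HasDerivAt f (g s) s) :
    ∫ s in Set.Ioo a b, g s = f b - f a := by
  set c : ℕ → ℝ := fun k => ((k : ℝ) + 1)⁻¹ with hc
  set F : ℕ → ℝ → E := fun k s => (c k)⁻¹ • (f (s + c k) - f s) with hF
  set μ : Measure ℝ := volume.restrict (Set.Ioo a b) with hμ
  have hcontf : Continuous f := hf.continuous
  have hFcont : ∀ k, Continuous (F k) :=
    fun k => ((hcontf.comp (continuous_id.add continuous_const)).sub hcontf).const_smul _
  have tendsto1 : Tendsto (fun k => ∫ s, F k s ∂μ) atTop (𝓝 (∫ s, g s ∂μ)) := by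
    refine tendsto_integral_of_dominated_convergence (fun _ => (L : ℝ))
      (fun k => (hFcont k).aestronglyMeasurable) ?_ ?_ ?_
    · exact integrable_const _
    · exact fun k => Filter.Eventually.of_forall fun s => quot_norm_le_aux hf s k
    · filter_upwards [hg.filter_mono (ae_mono Measure.restrict_le_self),
        ae_restrict_mem measurableSet_Ioo] with s hs hmem
      exact seq_slope_aux (hs hmem)
  have hii : ∀ u v : ℝ, IntervalIntegrable f volume u v := fun u v =>
    hcontf.intervalIntegrable u v
  have step : ∀ k, ∫ s, F k s ∂μ
      = (c k)⁻¹ • ((∫ t in b..(b + c k), f t) - ∫ t in a..(a + c k), f t) := by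
    intro k
    have h1 : ∫ s, F k s ∂μ = ∫ s in a..b, F k s := by
      rw [intervalIntegral.integral_of_le hab, integral_Ioc_eq_integral_Ioo]
    have h2 : (∫ s in a..b, F k s)
        = (c k)⁻¹ • ((∫ s in a..b, f (s + c k)) - ∫ s in a..b, f s) := by
      have hct : Continuous fun s : ℝ => f (s + c k) :=
        hcontf.comp (continuous_add_right (c k))
      rw [← intervalIntegral.integral_sub (hct.intervalIntegrable a b)
        (hii a b), ← intervalIntegral.integral_smul]
    have h3 : (∫ s in a..b, f (s + c k)) = ∫ s in (a + c k)..(b + c k), f s :=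
      intervalIntegral.integral_comp_add_right f (c k)
    have h4 : (∫ s in a..(a + c k), f s) + ∫ s in (a + c k)..(b + c k), f s
        = ∫ s in a..(b + c k), f s := integral_add_adjacent_intervals (hii _ _) (hii _ _)
    have h5 : (∫ s in a..b, f s) + ∫ s in b..(b + c k), f s
        = ∫ s in a..(b + c k), f s := integral_add_adjacent_intervals (hii _ _) (hii _ _)
    rw [h1, h2, h3]
    congr 1
    have h6 := h4.trans h5.symm
    rw [sub_eq_sub_iff_add_eq_add]
    rw [add_comm] at h6 ⊢
    linear_combination (norm := abel) h6
  have bdry : ∀ x : ℝ, Tendsto (fun k => (c k)⁻¹ • ∫ t in x..(x + c k), f t)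
      atTop (𝓝 (f x)) := by
    intro x
    have hG : HasDerivAt (fun u => ∫ t in x..u, f t) (f x) x :=
      integral_hasDerivAt_right (hii x x)
        hcontf.stronglyMeasurable.stronglyMeasurableAtFilter hcontf.continuousAt
    have := seq_slope_aux hG
    simpa [hc] using this
  have tendsto2 : Tendsto (fun k => ∫ s, F k s ∂μ) atTop (𝓝 (f b - f a)) := by
    simp only [step, smul_sub]
    exact (bdry b).sub (bdry a)
  exact tendsto_nhds_unique tendsto1 tendsto2

end aux

private lemma cone_bound_aux {n : ℕ} (e : EuclideanSpace ℝ (Fin n)) (he : ‖e‖ = 1)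
    {σ Lr : ℝ} (hσ : 0 < σ) (x : EuclideanSpace ℝ (Fin n))
    (hin : (1 - σ ^ 2) * ‖x‖ ≤ ⟪x, e⟫) (hx : ‖x‖ ≤ Lr) :
    ‖x - ‖x‖ • e‖ ≤ 3 * σ * Lr := by
  have hr0 : (0:ℝ) ≤ ‖x‖ := norm_nonneg _
  have hL0 : (0:ℝ) ≤ Lr := hr0.trans hx
  have hsq : ‖x - ‖x‖ • e‖ ^ 2 = 2 * ‖x‖ ^ 2 - 2 * ‖x‖ * ⟪x, e⟫ := by
    rw [norm_sub_sq_real, real_inner_smul_right, norm_smul, Real.norm_eq_abs,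
      abs_of_nonneg hr0, he]
    ring
  have h2 : ‖x - ‖x‖ • e‖ ^ 2 ≤ (3 * σ * Lr) ^ 2 := by
    rw [hsq]
    nlinarith [mul_le_mul_of_nonneg_left hin (by positivity : (0:ℝ) ≤ 2 * ‖x‖),
      mul_self_le_mul_self hr0 hx, sq_nonneg σ, sq_nonneg Lr, hσ.le]
  have := Real.sqrt_le_sqrt h2
  rwa [Real.sqrt_sq (norm_nonneg _), Real.sqrt_sq (by positivity)] at this

/-- Euclidean endpoint-drift: if `γ : [a,b] → ℝⁿ` is Lipschitz and its a.e. derivative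
lies in the cone `C(e,σ)`, then
`|γ(b) − γ(a) − (∫ₐᵇ |γ'(s)| ds)·e| ≤ 3σ·Lip(γ)·(b−a)`. -/
theorem stmt_9 {n : ℕ} (e : EuclideanSpace ℝ (Fin n)) (he : ‖e‖ = 1)
    (σ : ℝ) (hσ : 0 < σ) (hσ1 : σ < 1) (a b : ℝ) (hab : a ≤ b)
    (γ γ' : ℝ → EuclideanSpace ℝ (Fin n)) (L : ℝ≥0)
    (hlip : LipschitzOnWith L γ (Set.Icc a b))
    (hderiv : ∀ᵐ s ∂(volume : Measure ℝ), s ∈ Set.Icc a b →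
      HasDerivAt γ (γ' s) s ∧ (1 - σ ^ 2) * ‖γ' s‖ ≤ ⟪γ' s, e⟫) :
    ‖γ b - γ a - (∫ s in a..b, ‖γ' s‖) • e‖ ≤ 3 * σ * (L : ℝ) * (b - a) := by
  classical
  -- clamp and extend γ to a globally Lipschitz function
  set cl : ℝ → ℝ := fun t => max (min t b) a with hcl
  have hclmem : ∀ t, cl t ∈ Set.Icc a b := fun t =>
    ⟨le_max_right _ _, max_le (min_le_right _ _) hab⟩
  have hcleq : ∀ t ∈ Set.Icc a b, cl t = t := fun t ht => by
    simp only [hcl]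
    rw [min_eq_left ht.2, max_eq_left ht.1]
  set f : ℝ → EuclideanSpace ℝ (Fin n) := fun t => γ (cl t) with hfdef
  have hclip : LipschitzWith 1 cl := (LipschitzWith.id.min_const b).max_const a
  have hlipf : LipschitzWith L f := by
    have := hlip.comp (hclip.lipschitzOnWith (s := Set.univ))
      (fun t _ => hclmem t)
    rw [mul_one] at this
    exact lipschitzOnWith_univ.1 this
  have hfeq : ∀ t ∈ Set.Icc a b, f t = γ t := fun t ht => by
    simp only [hfdef, hcleq t ht]
  -- a.e. properties on the open interval
  have hd' : ∀ᵐ s ∂(volume : Measure ℝ), s ∈ Set.Ioo a b →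
      HasDerivAt f (γ' s) s ∧ (1 - σ ^ 2) * ‖γ' s‖ ≤ ⟪γ' s, e⟫ ∧ ‖γ' s‖ ≤ (L : ℝ) := by
    filter_upwards [hderiv] with s hs hmem
    obtain ⟨hd, hin⟩ := hs (Set.Ioo_subset_Icc_self hmem)
    have hev : f =ᶠ[𝓝 s] γ :=
      Filter.eventuallyEq_of_mem (Ioo_mem_nhds hmem.1 hmem.2)
        (fun t ht => hfeq t (Set.Ioo_subset_Icc_self ht))
    have hdf : HasDerivAt f (γ' s) s := hd.congr_of_eventuallyEq hev
    exact ⟨hdf, hin, deriv_norm_le_of_lip_aux hlipf hdf⟩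
  -- FTC
  have hftc : ∫ s in Set.Ioo a b, γ' s = γ b - γ a := by
    rw [lip_ftc_aux hab hlipf (hd'.mono fun s hs hm => (hs hm).1),
      hfeq b (Set.right_mem_Icc.2 hab), hfeq a (Set.left_mem_Icc.2 hab)]
  -- integrability of γ'
  have hmeas : AEStronglyMeasurable γ' (volume.restrict (Set.Ioo a b)) := by
    refine aestronglyMeasurable_of_tendsto_ae atTop
      (f := fun k : ℕ => fun s =>
        (((k : ℝ) + 1)⁻¹)⁻¹ • (f (s + ((k : ℝ) + 1)⁻¹) - f s)) (fun k => ?_) ?_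
    · exact (((hlipf.continuous.comp (continuous_add_right _)).sub
        hlipf.continuous).const_smul ((((k : ℝ) + 1)⁻¹)⁻¹)).aestronglyMeasurable
    · filter_upwards [(hd'.filter_mono (ae_mono Measure.restrict_le_self)),
        ae_restrict_mem measurableSet_Ioo] with s hs hmem
      exact seq_slope_aux (hs hmem).1
  have hIoo : IntegrableOn γ' (Set.Ioo a b) volume := by
    refine Integrable.mono' (g := fun _ => (L : ℝ)) ?_ hmeas ?_
    · exact integrableOn_const measure_Ioo_lt_top.ne
    · filter_upwards [(hd'.filter_mono (ae_mono Measure.restrict_le_self)),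
        ae_restrict_mem measurableSet_Ioo] with s hs hmem
      exact (hs hmem).2.2
  have hint : IntervalIntegrable γ' volume a b := by
    rw [intervalIntegrable_iff, Set.uIoc_of_le hab]
    exact (integrableOn_Ioc_iff_integrableOn_Ioo enorm_ne_top).2 hIoo
  have hintn : IntervalIntegrable (fun s => ‖γ' s‖) volume a b := hint.norm
  -- rewrite the LHS as a single integral
  have key : γ b - γ a = ∫ s in a..b, γ' s := by
    rw [intervalIntegral.integral_of_le hab, integral_Ioc_eq_integral_Ioo, hftc]
  have hintsm : IntervalIntegrable (fun s => ‖γ' s‖ • e) volume a b := by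
    rw [intervalIntegrable_iff] at hintn ⊢
    exact hintn.smul_const e
  have heq : γ b - γ a - (∫ s in a..b, ‖γ' s‖) • e
      = ∫ s in a..b, (γ' s - ‖γ' s‖ • e) := by
    rw [intervalIntegral.integral_sub hint hintsm,
      intervalIntegral.integral_smul_const, key]
  rw [heq]
  -- pointwise bound a.e. on the interval
  have hbne : ∀ᵐ t ∂(volume : Measure ℝ), t ≠ b := by
    rw [ae_iff]
    simpa using measure_singleton (μ := (volume : Measure ℝ)) b
  have hptwise : ∀ᵐ t ∂(volume.restrict (Set.uIoc a b)),
      ‖γ' t - ‖γ' t‖ • e‖ ≤ 3 * σ * (L : ℝ) := by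
    rw [Set.uIoc_of_le hab]
    filter_upwards [hd'.filter_mono (ae_mono Measure.restrict_le_self),
      ae_restrict_mem measurableSet_Ioc,
      hbne.filter_mono (ae_mono Measure.restrict_le_self)] with t hP ht hne
    have hmem : t ∈ Set.Ioo a b := ⟨ht.1, lt_of_le_of_ne ht.2 hne⟩
    obtain ⟨_, hin, hnle⟩ := hP hmem
    exact cone_bound_aux e he hσ (γ' t) hin hnle
  calc ‖∫ s in a..b, (γ' s - ‖γ' s‖ • e)‖
      ≤ |∫ _ in a..b, 3 * σ * (L : ℝ)| :=
        intervalIntegral.norm_integral_le_abs_of_norm_le hptwise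
          (intervalIntegrable_const)
    _ = 3 * σ * (L : ℝ) * (b - a) := by
        rw [intervalIntegral.integral_const, smul_eq_mul,
          abs_of_nonneg (mul_nonneg (sub_nonneg.2 hab) (by positivity))]
        ring
end

section
/- Let D ⊆ ℝ be a compact set, γ̄ : D → ℝⁿ a Lipschitz map whose (approximate) derivative γ̄'(t) exists and is nonzero for almost every t ∈ D, and let E ⊆ ℝⁿ be a set with H¹(E ∩ γ̄(D)) = 0 (H¹ the 1-dimensional Hausdorff measure). Then the Lebesgue measure of γ̄⁻¹(E) is zero. -/
open MeasureTheory
open scoped NNReal MeasureTheory ENNReal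

lemma aux_vol_le {n : ℕ} (γ : ℝ → EuclideanSpace ℝ (Fin n)) (A : Set ℝ) (c : ℝ≥0)
    (hc : 0 < c) (h : ∀ s ∈ A, ∀ t ∈ A, (c : ℝ) * dist s t ≤ dist (γ s) (γ t)) :
    volume A ≤ ((c⁻¹ : ℝ≥0) : ℝ≥0∞) * μH[1] (γ '' A) := by
  set f : A → EuclideanSpace ℝ (Fin n) := A.restrict γ with hf
  have hanti : AntilipschitzWith c⁻¹ f := by
    rw [antilipschitzWith_iff_le_mul_dist]
    intro x y
    have hx := h x x.2 y y.2
    have hcpos : (0:ℝ) < c := hc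
    rw [Subtype.dist_eq, NNReal.coe_inv, inv_mul_eq_div, le_div_iff₀ hcpos]
    exact (mul_comm _ _).trans_le hx
  have h1 : μH[1] (Set.univ : Set A) ≤ ((c⁻¹ : ℝ≥0) : ℝ≥0∞) ^ (1:ℝ) * μH[1] (f '' Set.univ) :=
    hanti.le_hausdorffMeasure_image zero_le_one _
  have h2 : f '' Set.univ = γ '' A := by
    rw [Set.image_univ, hf]; exact Set.range_domRestrict γ A
  have h3 : μH[1] (A : Set ℝ) = μH[1] (Set.univ : Set A) := by
    have := (isometry_subtype_coe : Isometry ((↑) : A → ℝ)).hausdorffMeasure_image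
      (Or.inl zero_le_one) Set.univ
    rw [Set.image_univ, Subtype.range_coe] at this
    exact this
  calc volume A = μH[1] (A : Set ℝ) := by rw [MeasureTheory.hausdorffMeasure_real]
    _ = μH[1] (Set.univ : Set A) := h3
    _ ≤ ((c⁻¹ : ℝ≥0) : ℝ≥0∞) ^ (1:ℝ) * μH[1] (f '' Set.univ) := h1
    _ = ((c⁻¹ : ℝ≥0) : ℝ≥0∞) * μH[1] (γ '' A) := by rw [ENNReal.rpow_one, h2]

/-- If `γ` is a Lipschitz curve whose (approximate) derivative exists and is nonzero at
almost every point of a compact set `D ⊆ ℝ`, and `E ⊆ ℝⁿ` satisfies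
`H¹(E ∩ γ(D)) = 0`, then `L¹(D ∩ γ⁻¹(E)) = 0`. -/
theorem stmt_10 {n : ℕ} (D : Set ℝ) (hD : IsCompact D)
    (γ γ' : ℝ → EuclideanSpace ℝ (Fin n)) (L : ℝ≥0) (hlip : LipschitzWith L γ)
    (hderiv : ∀ᵐ t ∂((volume : Measure ℝ).restrict D),
      HasDerivWithinAt γ (γ' t) D t ∧ γ' t ≠ 0)
    (E : Set (EuclideanSpace ℝ (Fin n))) (hE : μH[1] (E ∩ γ '' D) = 0) :
    volume (D ∩ γ ⁻¹' E) = 0 := by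
  classical
  set S : Set ℝ := D ∩ γ ⁻¹' E with hS
  set G : Set ℝ := {t | HasDerivWithinAt γ (γ' t) D t ∧ γ' t ≠ 0} with hG
  have hN : volume (Gᶜ ∩ D) = 0 := by
    have h := hderiv
    rw [MeasureTheory.ae_iff, Measure.restrict_apply' hD.measurableSet] at h
    convert h using 2
    rfl
  -- the pieces
  set A : ℕ → ℕ → ℤ → Set ℝ := fun m k j =>
    {t | t ∈ S ∧ (1:ℝ)/(m+1) ≤ ‖γ' t‖ ∧
      (∀ s ∈ D, |s - t| ≤ (1:ℝ)/(k+1) →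
        ‖γ s - γ t - (s - t) • γ' t‖ ≤ ((1:ℝ)/(2*(m+1))) * |s - t|) ∧
      t ∈ Set.Icc ((j:ℝ)/(k+1)) (((j:ℝ)+1)/(k+1))} with hA
  -- each piece is null
  have hAnull : ∀ m k j, volume (A m k j) = 0 := by
    intro m k j
    set c : ℝ≥0 := (2*(m+1) : ℝ≥0)⁻¹ with hc
    have hcpos : 0 < c := by positivity
    have hcr : (c : ℝ) = (1:ℝ)/(2*(m+1)) := by
      rw [hc]; push_cast; rw [one_div]
    have hbound : ∀ s ∈ A m k j, ∀ u ∈ A m k j,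
        (c : ℝ) * dist s u ≤ dist (γ s) (γ u) := by
      intro s hs u hu
      obtain ⟨hsS, hsnorm, hsapprox, hsIcc⟩ := hs
      obtain ⟨huS, hunorm, huapprox, huIcc⟩ := hu
      have hk1 : (0:ℝ) < (k:ℝ)+1 := by positivity
      have hsplit : ((j:ℝ)+1)/(k+1) = (j:ℝ)/(k+1) + 1/(k+1) := by ring
      have hsu : |s - u| ≤ (1:ℝ)/(k+1) := by
        rw [abs_sub_le_iff]
        constructor <;> [skip; skip] <;>
          · have h1 := hsIcc.1; have h2 := hsIcc.2; have h3 := huIcc.1; have h4 := huIcc.2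
            rw [hsplit] at *; linarith
      have happ := huapprox s hsS.1 hsu
      have hnormsmul : ‖(s - u) • γ' u‖ = |s - u| * ‖γ' u‖ := by
        rw [norm_smul, Real.norm_eq_abs]
      have htri : ‖(s - u) • γ' u‖ - ‖γ s - γ u‖ ≤ ‖γ s - γ u - (s - u) • γ' u‖ := by
        have := norm_sub_norm_le ((s - u) • γ' u) (γ s - γ u)
        calc ‖(s - u) • γ' u‖ - ‖γ s - γ u‖ ≤ ‖(s - u) • γ' u - (γ s - γ u)‖ := this
          _ = ‖γ s - γ u - (s - u) • γ' u‖ := norm_sub_rev _ _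
      rw [dist_eq_norm, dist_eq_norm, hcr, Real.norm_eq_abs]
      have hm1 : (0:ℝ) < (m:ℝ)+1 := by positivity
      have habs : (0:ℝ) ≤ |s - u| := abs_nonneg _
      have hlow : |s - u| * ((1:ℝ)/(m+1)) ≤ |s - u| * ‖γ' u‖ :=
        mul_le_mul_of_nonneg_left hunorm habs
      have h4 : (1:ℝ)/(2*((m:ℝ)+1)) * |s - u| + (1:ℝ)/(2*((m:ℝ)+1)) * |s - u|
          = |s - u| * ((1:ℝ)/((m:ℝ)+1)) := by field_simp; ring
      have key : ((1:ℝ)/(2*(m+1))) * |s - u| ≤ ‖γ s - γ u‖ := by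
        linarith [htri, happ, hlow, h4, hnormsmul.le, hnormsmul.ge]
      exact key
    have himg : γ '' A m k j ⊆ E ∩ γ '' D := by
      rintro y ⟨t, ht, rfl⟩
      exact ⟨ht.1.2, ⟨t, ht.1.1, rfl⟩⟩
    have := aux_vol_le γ (A m k j) c hcpos hbound
    have h0 : μH[1] (γ '' A m k j) = 0 :=
      le_antisymm (hE ▸ measure_mono himg) (zero_le)
    rw [h0, mul_zero] at this
    exact le_antisymm this (zero_le)
  -- the good part is covered by the pieces
  have hcover : S ∩ G ⊆ ⋃ m, ⋃ k, ⋃ j, A m k j := by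
    rintro t ⟨htS, hdt, hne⟩
    have hpos : 0 < ‖γ' t‖ := norm_pos_iff.2 hne
    obtain ⟨m, hm⟩ := exists_nat_gt ((1:ℝ)/‖γ' t‖)
    have hm1 : (0:ℝ) < (m:ℝ)+1 := by positivity
    have hmle : (1:ℝ)/(m+1) ≤ ‖γ' t‖ := by
      rw [div_le_iff₀ hm1]
      rw [div_lt_iff₀ hpos] at hm
      nlinarith
    have heps : (0:ℝ) < (1:ℝ)/(2*((m:ℝ)+1)) := by positivity
    have hlo := (hasDerivWithinAt_iff_isLittleO.1 hdt).def heps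
    rw [eventually_nhdsWithin_iff, Metric.eventually_nhds_iff] at hlo
    obtain ⟨δ, hδpos, hδ⟩ := hlo
    obtain ⟨k, hk⟩ := exists_nat_one_div_lt hδpos
    have hk1 : (0:ℝ) < (k:ℝ)+1 := by positivity
    refine Set.mem_iUnion.2 ⟨m, Set.mem_iUnion.2 ⟨k, Set.mem_iUnion.2 ⟨⌊t * ((k:ℝ)+1)⌋, ?_⟩⟩⟩
    refine ⟨htS, hmle, ?_, ?_⟩
    · intro s hsD hsk
      have hdist : dist s t < δ := by
        rw [Real.dist_eq]
        calc |s - t| ≤ (1:ℝ)/(k+1) := hsk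
          _ < δ := hk
      have := hδ hdist hsD
      simpa [Real.norm_eq_abs] using this
    · constructor
      · rw [div_le_iff₀ hk1]
        exact Int.floor_le _
      · rw [le_div_iff₀ hk1]
        exact le_of_lt (Int.lt_floor_add_one _)
  -- conclude
  have hSG : volume (S ∩ G) = 0 := by
    refine le_antisymm (le_trans (measure_mono hcover) ?_) (zero_le)
    rw [measure_iUnion_null fun m => measure_iUnion_null fun k =>
      measure_iUnion_null fun j => hAnull m k j]
  have hSGc : volume (S ∩ Gᶜ) = 0 := by
    refine le_antisymm (le_trans (measure_mono ?_) hN.le) (zero_le)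
    rintro t ⟨htS, htG⟩
    exact ⟨htG, htS.1⟩
  have : volume S ≤ volume (S ∩ G) + volume (S ∩ Gᶜ) := by
    calc volume S = volume ((S ∩ G) ∪ (S ∩ Gᶜ)) := by
          rw [← Set.inter_union_distrib_left, Set.union_compl_self, Set.inter_univ]
      _ ≤ volume (S ∩ G) + volume (S ∩ Gᶜ) := measure_union_le _ _
    
  rw [hSG, hSGc, add_zero] at this
  exact le_antisymm this (zero_le)
end

section
/- Let (X,d) be a metric space and let γ₁ : D₁ → X and γ₂ : D₂ → X be maps defined on compact subsets of ℝ satisfying (1/2)|s−t| ≤ d(γ_i(s),γ_i(t)) ≤ 2|s−t| for all s,t in their domains. Identify each γ_i with its graph in ℝ × X, and suppose the Hausdorff distance between graph(γ₁) and graph(γ₂) (with respect to the product metric on ℝ × X, using the max of the component distances) is less than ε. If x = γ₁(t₁) and y = γ₂(t₂) with d(x,y) < δ, then |t₁ − t₂| ≤ 2δ + 3ε. -/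
/-- If two 2-biLipschitz fragments have graphs at Hausdorff distance `< ε` (in `ℝ × X`
with the sup product metric) and `x = γ₁(t₁)`, `y = γ₂(t₂)` satisfy `d(x,y) < δ`, then
`|t₁ − t₂| ≤ 2δ + 3ε`. -/
theorem stmt_13 {X : Type*} [MetricSpace X] (D₁ D₂ : Set ℝ)
    (hD₁ : IsCompact D₁) (hD₂ : IsCompact D₂) (γ₁ γ₂ : ℝ → X)
    (h₁ : ∀ s ∈ D₁, ∀ t ∈ D₁,
      (1 / 2) * |s - t| ≤ dist (γ₁ s) (γ₁ t) ∧ dist (γ₁ s) (γ₁ t) ≤ 2 * |s - t|)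
    (h₂ : ∀ s ∈ D₂, ∀ t ∈ D₂,
      (1 / 2) * |s - t| ≤ dist (γ₂ s) (γ₂ t) ∧ dist (γ₂ s) (γ₂ t) ≤ 2 * |s - t|)
    (ε δ : ℝ) (hε : 0 < ε) (hδ : 0 < δ)
    (hH : Metric.hausdorffDist {p : ℝ × X | p.1 ∈ D₁ ∧ p.2 = γ₁ p.1}
      {p : ℝ × X | p.1 ∈ D₂ ∧ p.2 = γ₂ p.1} < ε)
    (t₁ t₂ : ℝ) (ht₁ : t₁ ∈ D₁) (ht₂ : t₂ ∈ D₂)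
    (hd : dist (γ₁ t₁) (γ₂ t₂) < δ) :
    |t₁ - t₂| ≤ 2 * δ + 3 * ε := by
  set G₁ : Set (ℝ × X) := {p : ℝ × X | p.1 ∈ D₁ ∧ p.2 = γ₁ p.1} with hG₁
  set G₂ : Set (ℝ × X) := {p : ℝ × X | p.1 ∈ D₂ ∧ p.2 = γ₂ p.1} with hG₂
  -- graphs are images of compact sets under continuous maps, hence compact
  have key : ∀ (D : Set ℝ) (γ : ℝ → X), IsCompact D →
      (∀ s ∈ D, ∀ t ∈ D,
        (1 / 2) * |s - t| ≤ dist (γ s) (γ t) ∧ dist (γ s) (γ t) ≤ 2 * |s - t|) →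
      IsCompact {p : ℝ × X | p.1 ∈ D ∧ p.2 = γ p.1} := by
    intro D γ hD h
    have hlip : LipschitzOnWith 2 γ D := by
      intro s hs t ht
      have := (h s hs t ht).2
      rw [edist_dist, edist_dist]
      rw [ENNReal.ofReal_le_iff_le_toReal (by simp [ENNReal.mul_ne_top])]
      calc dist (γ s) (γ t) ≤ 2 * |s - t| := this
        _ = (((2 : NNReal) : ENNReal) * ENNReal.ofReal (dist s t)).toReal := by
            rw [ENNReal.toReal_mul, ENNReal.toReal_ofReal dist_nonneg]
            simp [Real.dist_eq]
    have : {p : ℝ × X | p.1 ∈ D ∧ p.2 = γ p.1} = (fun t => (t, γ t)) '' D := by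
      ext ⟨a, b⟩
      constructor
      · rintro ⟨ha, hb⟩; exact ⟨a, ha, Prod.ext rfl hb.symm⟩
      · rintro ⟨t, ht, h'⟩
        obtain ⟨rfl, rfl⟩ := Prod.mk.injEq .. ▸ h'
        exact ⟨ht, rfl⟩
    rw [this]
    exact hD.image_of_continuousOn
      (continuousOn_id.prodMk hlip.continuousOn)
  have hc₁ : IsCompact G₁ := key D₁ γ₁ hD₁ h₁
  have hc₂ : IsCompact G₂ := key D₂ γ₂ hD₂ h₂
  have hne₂ : G₂.Nonempty := ⟨(t₂, γ₂ t₂), ht₂, rfl⟩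
  have hfin : EMetric.hausdorffEdist G₁ G₂ ≠ ⊤ :=
    Metric.hausdorffEdist_ne_top_of_nonempty_of_bounded
      ⟨(t₁, γ₁ t₁), ht₁, rfl⟩ hne₂ hc₁.isBounded hc₂.isBounded
  obtain ⟨q, hq, hdq⟩ := Metric.exists_dist_lt_of_hausdorffDist_lt
    (show ((t₁, γ₁ t₁) : ℝ × X) ∈ G₁ from ⟨ht₁, rfl⟩) hH hfin
  obtain ⟨hqD, hqγ⟩ := hq
  -- dist on product is max
  have h1 : dist t₁ q.1 < ε := lt_of_le_of_lt (le_max_left _ _) (by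
    simpa [Prod.dist_eq] using hdq)
  have h2 : dist (γ₁ t₁) (γ₂ q.1) < ε := by
    have := lt_of_le_of_lt (le_max_right (dist t₁ q.1) (dist (γ₁ t₁) q.2))
      (by simpa [Prod.dist_eq] using hdq)
    rwa [hqγ] at this
  have h3 : dist (γ₂ q.1) (γ₂ t₂) < ε + δ := by
    calc dist (γ₂ q.1) (γ₂ t₂) ≤ dist (γ₂ q.1) (γ₁ t₁) + dist (γ₁ t₁) (γ₂ t₂) :=
          dist_triangle _ _ _
      _ < ε + δ := by rw [dist_comm]; linarith
  have h4 : (1 / 2) * |q.1 - t₂| ≤ dist (γ₂ q.1) (γ₂ t₂) := (h₂ q.1 hqD t₂ ht₂).1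
  have h5 : |q.1 - t₂| < 2 * ε + 2 * δ := by linarith
  have := abs_sub_abs_le_abs_sub t₁ t₂
  calc |t₁ - t₂| ≤ |t₁ - q.1| + |q.1 - t₂| := abs_sub_le _ _ _
    _ ≤ 2 * δ + 3 * ε := by
        rw [Real.dist_eq] at h1; linarith
end

section
/- Let (X,d) be a complete separable metric space, Γ the set of 2-biLipschitz fragments (maps γ from a nonempty compact subset of ℝ to X with (1/2)|s−t| ≤ d(γ(s),γ(t)) ≤ 2|s−t|), identified via graphs with a subset of the space H(X) of nonempty compact subsets of ℝ × X with the Hausdorff metric. Then the evaluation relation A(X) := {(x,γ) ∈ X × Γ : ∃ t ∈ Dom(γ), γ(t) = x} is a Borel (indeed closed) subset of X × H(X). -/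
open Metric TopologicalSpace Filter Topology

private lemma aux_approx {E : Type*} [MetricSpace E] {K : ℕ → NonemptyCompacts E}
    {L : NonemptyCompacts E} (hK : Tendsto K atTop (𝓝 L)) {q : E} (hq : q ∈ (L : Set E)) :
    ∃ u : ℕ → E, (∀ n, u n ∈ (K n : Set E)) ∧ Tendsto u atTop (𝓝 q) := by
  choose u hu hud using fun n => (K n).isCompact.exists_infDist_eq_dist (K n).nonempty q
  refine ⟨u, hu, ?_⟩
  have hd : ∀ n, dist q (u n) ≤ dist L (K n) := fun n => by
    rw [← hud n, NonemptyCompacts.dist_eq]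
    exact infDist_le_hausdorffDist_of_mem hq
      (hausdorffEdist_ne_top_of_nonempty_of_bounded L.nonempty (K n).nonempty
        L.isCompact.isBounded (K n).isCompact.isBounded)
  have hdist0 : Tendsto (fun n => dist L (K n)) atTop (𝓝 0) := by
    simpa [dist_comm] using tendsto_iff_dist_tendsto_zero.1 hK
  rw [tendsto_iff_dist_tendsto_zero]
  exact squeeze_zero (fun n => dist_nonneg) (fun n => by rw [dist_comm]; exact hd n) hdist0

/-- The evaluation relation `A(X) = {(x,γ) : γ a 2-biLipschitz fragment, x ∈ im γ}`,
with fragments identified with their graphs in the hyperspace of nonempty compact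
subsets of `ℝ × X` (Hausdorff metric), is a closed (hence Borel) subset of
`X × H(X)`. -/
theorem stmt_17 {X : Type*} [MetricSpace X] [CompleteSpace X] [SecondCountableTopology X] :
    IsClosed {p : X × TopologicalSpace.NonemptyCompacts (ℝ × X) |
      (∀ q ∈ (p.2 : Set (ℝ × X)), ∀ q' ∈ (p.2 : Set (ℝ × X)),
        (1 / 2) * |q.1 - q'.1| ≤ dist q.2 q'.2 ∧ dist q.2 q'.2 ≤ 2 * |q.1 - q'.1|) ∧
      ∃ t : ℝ, (t, p.1) ∈ (p.2 : Set (ℝ × X))} := by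
  rw [← isSeqClosed_iff_isClosed]
  intro f p hf hfp
  have h1 : Tendsto (fun n => (f n).1) atTop (𝓝 p.1) := (continuous_fst.tendsto p).comp hfp
  have h2 : Tendsto (fun n => (f n).2) atTop (𝓝 p.2) := (continuous_snd.tendsto p).comp hfp
  constructor
  · -- the biLipschitz condition is closed
    intro q hq q' hq'
    obtain ⟨u, hu, huq⟩ := aux_approx h2 hq
    obtain ⟨u', hu', huq'⟩ := aux_approx h2 hq'
    have hu2 : Tendsto (fun n => (u n).2) atTop (𝓝 q.2) := (continuous_snd.tendsto q).comp huq
    have hu'2 : Tendsto (fun n => (u' n).2) atTop (𝓝 q'.2) := (continuous_snd.tendsto q').comp huq'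
    have hu1 : Tendsto (fun n => (u n).1) atTop (𝓝 q.1) := (continuous_fst.tendsto q).comp huq
    have hu'1 : Tendsto (fun n => (u' n).1) atTop (𝓝 q'.1) := (continuous_fst.tendsto q').comp huq'
    have hdist : Tendsto (fun n => dist (u n).2 (u' n).2) atTop (𝓝 (dist q.2 q'.2)) :=
      hu2.dist hu'2
    have habs : Tendsto (fun n => |(u n).1 - (u' n).1|) atTop (𝓝 |q.1 - q'.1|) :=
      (hu1.sub hu'1).abs
    constructor
    · exact le_of_tendsto_of_tendsto' (habs.const_mul (1 / 2)) hdist fun n =>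
        ((hf n).1 _ (hu n) _ (hu' n)).1
    · exact le_of_tendsto_of_tendsto' hdist (habs.const_mul 2) fun n =>
        ((hf n).1 _ (hu n) _ (hu' n)).2
  · -- membership is closed
    choose t ht using fun n => (hf n).2
    set s : ℕ → ℝ × X := fun n => (t n, (f n).1) with hs
    have hsK : ∀ n, s n ∈ ((f n).2 : Set (ℝ × X)) := ht
    choose r hrL hrd using fun n =>
      p.2.isCompact.exists_infDist_eq_dist p.2.nonempty (s n)
    have hdr : ∀ n, dist (s n) (r n) ≤ dist (f n).2 p.2 := fun n => by
      rw [← hrd n, NonemptyCompacts.dist_eq]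
      exact infDist_le_hausdorffDist_of_mem (hsK n)
        (hausdorffEdist_ne_top_of_nonempty_of_bounded (f n).2.nonempty p.2.nonempty
          (f n).2.isCompact.isBounded p.2.isCompact.isBounded)
    have hdr0 : Tendsto (fun n => dist (s n) (r n)) atTop (𝓝 0) :=
      squeeze_zero (fun n => dist_nonneg) hdr (tendsto_iff_dist_tendsto_zero.1 h2)
    obtain ⟨a, haL, φ, hφ, hra⟩ := p.2.isCompact.tendsto_subseq hrL
    have hsa : Tendsto (fun n => s (φ n)) atTop (𝓝 a) :=
      hra.congr_dist (by simpa [dist_comm, Function.comp_def] using hdr0.comp hφ.tendsto_atTop)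
    have hsnd : Tendsto (fun n => (s (φ n)).2) atTop (𝓝 a.2) :=
      (continuous_snd.tendsto a).comp hsa
    have hsnd' : Tendsto (fun n => (s (φ n)).2) atTop (𝓝 p.1) := by
      simpa [hs, Function.comp_def] using h1.comp hφ.tendsto_atTop
    have hax : a.2 = p.1 := tendsto_nhds_unique hsnd hsnd'
    exact ⟨a.1, by rw [← hax]; exact haL⟩
end
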